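/- Fix integers q1, q2 ≥ 2 and let (η(x))_{x ∈ ℤ} be i.i.d. random variables, each uniformly distributed on {1,…,q1} × {1,…,q2}. For each x ∈ ℤ and i ∈ {1,2}, let D_i(x) = 1 if η(x) and η(x+1) differ in coordinate i and D_i(x) = 0 otherwise. Then the family {D_i(x) : x ∈ ℤ, i ∈ {1,2}} consists of mutually independent random variables, and D_i(x) is Bernoulli with success probability 1 − 1/q_i. -/

import Mathlib

open MeasureTheory ProbabilityTheory
open scoped ENNReal

/-- The disagreement indicators: `disagree η (x, i) ω = true` iff the cultures at `x` and
`x + 1` differ in coordinate `i` (where `i = 0` is the first feature, `i = 1` the second). -/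
def disagree {Ω : Type*} {q1 q2 : ℕ} (η : ℤ → Ω → Fin q1 × Fin q2) :
    ℤ × Fin 2 → Ω → Bool :=
  fun p ω =>
    if p.2 = 0 then decide ((η p.1 ω).1 ≠ (η (p.1 + 1) ω).1)
    else decide ((η p.1 ω).2 ≠ (η (p.1 + 1) ω).2)

lemma bool_mspace_eq : (inferInstance : MeasurableSpace Bool) = .generateFrom {{true}} := by
  apply le_antisymm
  · intro s _
    classical
    have h1 : MeasurableSet[MeasurableSpace.generateFrom {{true}}] ({true} : Set Bool) :=
      MeasurableSpace.measurableSet_generateFrom rfl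
    have h0 : MeasurableSet[MeasurableSpace.generateFrom {{true}}] ({false} : Set Bool) := by
      have he : ({false} : Set Bool) = {true}ᶜ := by ext b; cases b <;> simp
      rw [he]; exact h1.compl
    have hs : s = (if true ∈ s then {true} else ∅) ∪ (if false ∈ s then {false} else ∅) := by
      ext b; cases b <;> by_cases ht : true ∈ s <;> by_cases hf : false ∈ s <;> simp [ht, hf]
    rw [hs]
    apply MeasurableSet.union <;> split <;>
      first | exact h1 | exact h0 | exact @MeasurableSet.empty Bool (.generateFrom {{true}})
  · exact le_top

lemma comap_bool {Ω : Type*} (f : Ω → Bool) :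
    MeasurableSpace.comap f inferInstance = .generateFrom {f ⁻¹' {true}} := by
  rw [bool_mspace_eq, MeasurableSpace.comap_generateFrom, Set.image_singleton]

lemma ennreal_aux (q : ℕ) (hq : 2 ≤ q) :
    ((q - 1 : ℕ) : ℝ≥0∞) * (q : ℝ≥0∞)⁻¹ = 1 - (q : ℝ≥0∞)⁻¹ := by
  have hq0 : (q : ℝ≥0∞) ≠ 0 := Nat.cast_ne_zero.2 (by omega)
  have hqt : (q : ℝ≥0∞) ≠ ∞ := ENNReal.natCast_ne_top q
  rw [ENNReal.natCast_sub, ENNReal.sub_mul (fun _ _ => ENNReal.inv_ne_top.2 hq0),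
    ENNReal.mul_inv_cancel hq0 hqt, Nat.cast_one, one_mul]

theorem main_aux {Ω : Type*} [MeasurableSpace Ω] (P : Measure Ω) [IsProbabilityMeasure P]
    (q1 q2 : ℕ) (hq1 : 2 ≤ q1) (hq2 : 2 ≤ q2)
    (η : ℤ → Ω → Fin q1 × Fin q2)
    (hmeas : ∀ x, Measurable (η x))
    (hindep : iIndepFun η P)
    (hunif : ∀ x (a : Fin q1 × Fin q2), P {ω | η x ω = a} = ((q1 : ℝ≥0∞) * q2)⁻¹)
    (S : Finset (ℤ × Fin 2)) :
    P (⋂ j ∈ S, {ω | disagree η j ω = true}) =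
      ∏ j ∈ S, (if j.2 = 0 then 1 - (q1 : ℝ≥0∞)⁻¹ else 1 - (q2 : ℝ≥0∞)⁻¹) := by
  classical
  -- measurability of the disagreement events
  have hdis : ∀ j, Measurable (disagree η j) := by
    intro j
    by_cases hj : j.2 = 0
    · have he : disagree η j = (fun p : (Fin q1 × Fin q2) × (Fin q1 × Fin q2) =>
          decide (p.1.1 ≠ p.2.1)) ∘ fun ω => (η j.1 ω, η (j.1 + 1) ω) := by
        funext ω; simp [disagree, hj, Function.comp]
      rw [he]
      exact Measurable.of_discrete.comp ((hmeas j.1).prodMk (hmeas (j.1 + 1)))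
    · have he : disagree η j = (fun p : (Fin q1 × Fin q2) × (Fin q1 × Fin q2) =>
          decide (p.1.2 ≠ p.2.2)) ∘ fun ω => (η j.1 ω, η (j.1 + 1) ω) := by
        funext ω; simp [disagree, hj, Function.comp]
      rw [he]
      exact Measurable.of_discrete.comp ((hmeas j.1).prodMk (hmeas (j.1 + 1)))
  have hAmeas : ∀ j, MeasurableSet {ω | disagree η j ω = true} := fun j =>
    (hdis j) (MeasurableSet.singleton true)
  -- uniform distribution on finite sets of values
  have hunif' : ∀ (x : ℤ) (G : Finset (Fin q1 × Fin q2)),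
      P (η x ⁻¹' ↑G) = G.card * ((q1 : ℝ≥0∞) * q2)⁻¹ := by
    intro x G
    have he : η x ⁻¹' ↑G = ⋃ a ∈ G, η x ⁻¹' {a} := by ext ω; simp
    rw [he, measure_biUnion_finset]
    · have : ∀ a ∈ G, P (η x ⁻¹' {a}) = ((q1 : ℝ≥0∞) * q2)⁻¹ := fun a _ => hunif x a
      rw [Finset.sum_congr rfl this, Finset.sum_const, nsmul_eq_mul]
    · intro a _ b _ hab
      apply Set.disjoint_left.2
      intro ω h1 h2
      exact hab (by rw [← h1, ← h2])
    · exact fun a _ => (hmeas x) (MeasurableSet.singleton a)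
  -- factorization over disjoint coordinates
  have hfact : ∀ (Y : Finset ℤ) (z : ℤ), z ∉ Y → ∀ (C : Set Ω),
      (∀ ω ω', (∀ y ∈ Y, η y ω = η y ω') → ω ∈ C → ω' ∈ C) →
      ∀ (D : Set (Fin q1 × Fin q2)),
      P (C ∩ η z ⁻¹' D) = P C * P (η z ⁻¹' D) := by
    intro Y z hz C hC D
    have h := hindep.indepFun_finset Y {z} (Finset.disjoint_singleton_right.2 hz) hmeas
    rw [indepFun_iff_measure_inter_preimage_eq_mul] at h
    have hs : (fun a (i : Y) => η i a) ⁻¹' ((fun a (i : Y) => η i a) '' C) = C := by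
      apply Set.Subset.antisymm _ (Set.subset_preimage_image _ _)
      rintro ω' ⟨ω, hωC, hΦeq⟩
      exact hC ω ω' (fun y hy => congrFun hΦeq ⟨y, hy⟩) hωC
    have ht : (fun a (i : ({z} : Finset ℤ)) => η i a) ⁻¹'
        ((fun a (i : ({z} : Finset ℤ)) => η i a) '' (η z ⁻¹' D)) = η z ⁻¹' D := by
      apply Set.Subset.antisymm _ (Set.subset_preimage_image _ _)
      rintro ω' ⟨ω, hωD, hΨeq⟩
      have hzz : η z ω = η z ω' := congrFun hΨeq ⟨z, by simp⟩
      simpa [Set.mem_preimage, ← hzz] using hωD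
    have := h ((fun a (i : Y) => η i a) '' C)
      ((fun a (i : ({z} : Finset ℤ)) => η i a) '' (η z ⁻¹' D))
      (Set.Finite.measurableSet (Set.toFinite _)) (Set.Finite.measurableSet (Set.toFinite _))
    rwa [hs, ht] at this
  induction S using Finset.strongInduction with
  | _ S ih =>
  rcases S.eq_empty_or_nonempty with rfl | hS
  · simp
  have hne : (S.image Prod.fst).Nonempty := hS.image _
  set x : ℤ := (S.image Prod.fst).max' hne with hxdef
  have hxmem : ∃ j ∈ S, j.1 = x := by
    have := (S.image Prod.fst).max'_mem hne
    simpa [Finset.mem_image] using this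
  have hxle : ∀ j ∈ S, j.1 ≤ x := fun j hj => Finset.le_max' _ _ (Finset.mem_image_of_mem _ hj)
  set m : ℤ := (S.image Prod.fst).min' hne with hmdef
  have hmle : ∀ j ∈ S, m ≤ j.1 := fun j hj => Finset.min'_le _ _ (Finset.mem_image_of_mem _ hj)
  set S' : Finset (ℤ × Fin 2) := S.filter (fun j => ¬ j.1 = x) with hS'def
  have hS'sub : S' ⊂ S := by
    obtain ⟨j, hjS, hjx⟩ := hxmem
    exact Finset.filter_ssubset.2 ⟨j, hjS, by simp [hjx]⟩
  set E : Set Ω := ⋂ j ∈ S', {ω | disagree η j ω = true} with hEdef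
  have hEmeas : MeasurableSet E :=
    MeasurableSet.biInter (Finset.countable_toSet S') (fun j _ => hAmeas j)
  set Y : Finset ℤ := Finset.Icc m x with hYdef
  have hzY : x + 1 ∉ Y := by
    simp only [hYdef, Finset.mem_Icc]
    omega
  have hvertex : ∀ j ∈ S', j.1 ∈ Y ∧ j.1 + 1 ∈ Y := by
    intro j hj
    rw [hS'def, Finset.mem_filter] at hj
    obtain ⟨hjS, hjx⟩ := hj
    have h1 := hmle j hjS; have h2 := hxle j hjS
    constructor <;> (simp only [hYdef, Finset.mem_Icc]; omega)
  have hxY : x ∈ Y := by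
    obtain ⟨j, hjS, _⟩ := hxmem
    have h1 := hmle j hjS; have h2 := hxle j hjS
    simp only [hYdef, Finset.mem_Icc]; omega
  set G : Fin q1 × Fin q2 → Finset (Fin q1 × Fin q2) := fun v =>
    Finset.univ.filter (fun w => ((x, (0 : Fin 2)) ∈ S → v.1 ≠ w.1) ∧
      ((x, (1 : Fin 2)) ∈ S → v.2 ≠ w.2)) with hGdef
  -- decomposition of the event
  have hdecomp : (⋂ j ∈ S, {ω | disagree η j ω = true}) =
      ⋃ v ∈ (Finset.univ : Finset (Fin q1 × Fin q2)),
        ((E ∩ {ω | η x ω = v}) ∩ η (x + 1) ⁻¹' ↑(G v)) := by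
    ext ω
    simp only [Set.mem_iInter, Set.mem_iUnion, Set.mem_inter_iff, Set.mem_setOf_eq,
      Set.mem_preimage, Finset.mem_coe, exists_prop]
    constructor
    · intro h
      refine ⟨η x ω, Finset.mem_univ _, ⟨⟨?_, rfl⟩, ?_⟩⟩
      · rw [hEdef]
        simp only [Set.mem_iInter, Set.mem_setOf_eq]
        intro j hj
        exact h j (Finset.mem_filter.1 hj).1
      · rw [hGdef]
        simp only [Finset.mem_filter, Finset.mem_univ, true_and]
        refine ⟨fun h0 => ?_, fun h1 => ?_⟩
        · have := h _ h0
          simpa [disagree] using this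
        · have := h _ h1
          simpa [disagree] using this
    · rintro ⟨v, -, ⟨⟨hE, hv⟩, hG⟩⟩ j hj
      by_cases hjx : j.1 = x
      · rw [hGdef] at hG
        simp only [Finset.mem_filter, Finset.mem_univ, true_and] at hG
        obtain ⟨a, i⟩ := j
        simp only at hjx
        subst hjx
        fin_cases i
        · have h' := hG.1 hj
          have d0 : disagree η (x, (0 : Fin 2)) ω = true ↔ ¬ (η x ω).1 = (η (x+1) ω).1 := by
            simp [disagree]
          exact (d0).mpr (by rw [hv]; exact h')
        · have h' := hG.2 hj
          have d1 : disagree η (x, (1 : Fin 2)) ω = true ↔ ¬ (η x ω).2 = (η (x+1) ω).2 := by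
            simp [disagree]
          exact (d1).mpr (by rw [hv]; exact h')
      · have hjS' : j ∈ S' := by rw [hS'def, Finset.mem_filter]; exact ⟨hj, hjx⟩
        rw [hEdef] at hE
        simp only [Set.mem_iInter, Set.mem_setOf_eq] at hE
        exact hE j hjS'
  -- determinedness of E ∩ {η x = v} on coordinates in Y
  have hCdet : ∀ v : Fin q1 × Fin q2, ∀ ω ω', (∀ y ∈ Y, η y ω = η y ω') →
      ω ∈ E ∩ {ω | η x ω = v} → ω' ∈ E ∩ {ω | η x ω = v} := by
    intro v ω ω' hagree ⟨hE, hv⟩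
    constructor
    · rw [hEdef] at hE ⊢
      simp only [Set.mem_iInter, Set.mem_setOf_eq] at hE ⊢
      intro j hj
      have h1 : η j.1 ω = η j.1 ω' := hagree _ (hvertex j hj).1
      have h2 : η (j.1 + 1) ω = η (j.1 + 1) ω' := hagree _ (hvertex j hj).2
      have := hE j hj
      simp only [disagree] at this ⊢
      rw [← h1, ← h2]
      exact this
    · have := hagree x hxY
      simp only [Set.mem_setOf_eq] at hv ⊢
      rw [← this]; exact hv
  -- measure computation
  have hmeasC : ∀ v : Fin q1 × Fin q2, MeasurableSet (E ∩ {ω | η x ω = v}) := fun v =>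
    hEmeas.inter ((hmeas x) (MeasurableSet.singleton v))
  rw [hdecomp, measure_biUnion_finset]
  rotate_left
  · intro a _ b _ hab
    apply Set.disjoint_left.2
    intro ω h1 h2
    exact hab (by rw [← h1.1.2, ← h2.1.2])
  · intro v _
    exact (hmeasC v).inter ((hmeas (x+1)) (Set.Finite.measurableSet (Set.toFinite _)))
  have hterm : ∀ v : Fin q1 × Fin q2,
      P ((E ∩ {ω | η x ω = v}) ∩ η (x + 1) ⁻¹' ↑(G v)) =
      P (E ∩ {ω | η x ω = v}) *
        (((if (x, (0 : Fin 2)) ∈ S then q1 - 1 else q1) *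
          (if (x, (1 : Fin 2)) ∈ S then q2 - 1 else q2) : ℕ) * ((q1 : ℝ≥0∞) * q2)⁻¹) := by
    intro v
    rw [hfact Y (x + 1) hzY _ (hCdet v) _, hunif']
    congr 2
    -- card of G v
    simp only [hGdef]
    have hsplitG : Finset.filter (fun w : Fin q1 × Fin q2 =>
        ((x, (0 : Fin 2)) ∈ S → v.1 ≠ w.1) ∧ ((x, (1 : Fin 2)) ∈ S → v.2 ≠ w.2)) Finset.univ =
        (Finset.univ.filter (fun a => (x, (0 : Fin 2)) ∈ S → v.1 ≠ a)) ×ˢ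
        (Finset.univ.filter (fun b => (x, (1 : Fin 2)) ∈ S → v.2 ≠ b)) := by
      ext ⟨a, b⟩
      simp [Finset.mem_filter, Finset.mem_product]
    rw [hsplitG, Finset.card_product, Nat.cast_mul, Nat.cast_mul]
    congr 1
    · by_cases h0 : (x, (0 : Fin 2)) ∈ S
      · simp only [h0, forall_true_left, if_pos]
        rw [Finset.filter_ne, Finset.card_erase_of_mem (Finset.mem_univ _)]
        simp
      · simp [h0]
    · by_cases h1 : (x, (1 : Fin 2)) ∈ S
      · simp only [h1, forall_true_left, if_pos]
        rw [Finset.filter_ne, Finset.card_erase_of_mem (Finset.mem_univ _)]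
        simp
      · simp [h1]
  rw [Finset.sum_congr rfl (fun v _ => hterm v), ← Finset.sum_mul]
  have hEsum : ∑ v : Fin q1 × Fin q2, P (E ∩ {ω | η x ω = v}) = P E := by
    rw [← measure_biUnion_finset]
    · congr 1
      ext ω
      simp
    · intro a _ b _ hab
      apply Set.disjoint_left.2
      intro ω h1 h2
      exact hab (by rw [← h1.2, ← h2.2])
    · exact fun v _ => hmeasC v
  rw [hEsum, ih S' hS'sub]
  -- recombine the product
  have hsplit : ∏ j ∈ S, (if j.2 = 0 then 1 - (q1 : ℝ≥0∞)⁻¹ else 1 - (q2 : ℝ≥0∞)⁻¹) =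
      (∏ j ∈ S.filter (fun j => ¬ j.1 = x), (if j.2 = 0 then 1 - (q1 : ℝ≥0∞)⁻¹ else 1 - (q2 : ℝ≥0∞)⁻¹)) *
      ∏ j ∈ S.filter (fun j => j.1 = x), (if j.2 = 0 then 1 - (q1 : ℝ≥0∞)⁻¹ else 1 - (q2 : ℝ≥0∞)⁻¹) := by
    rw [mul_comm, Finset.prod_filter_mul_prod_filter_not]
  rw [hsplit]
  congr 1
  have hS0 : ∏ j ∈ S.filter (fun j => j.1 = x),
      (if j.2 = 0 then 1 - (q1 : ℝ≥0∞)⁻¹ else 1 - (q2 : ℝ≥0∞)⁻¹) =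
      (if (x, (0 : Fin 2)) ∈ S then 1 - (q1 : ℝ≥0∞)⁻¹ else 1) *
      (if (x, (1 : Fin 2)) ∈ S then 1 - (q2 : ℝ≥0∞)⁻¹ else 1) := by
    by_cases h0 : (x, (0 : Fin 2)) ∈ S <;> by_cases h1 : (x, (1 : Fin 2)) ∈ S
    · have : S.filter (fun j => j.1 = x) = {(x, (0 : Fin 2)), (x, (1 : Fin 2))} := by
        ext ⟨a, i⟩
        simp only [Finset.mem_filter, Finset.mem_insert, Finset.mem_singleton, Prod.mk.injEq]
        constructor
        · rintro ⟨hmem, rfl⟩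
          fin_cases i
          · exact Or.inl ⟨rfl, rfl⟩
          · exact Or.inr ⟨rfl, rfl⟩
        · rintro (⟨rfl, rfl⟩ | ⟨rfl, rfl⟩) <;> exact ⟨by assumption, rfl⟩
      rw [this, Finset.prod_insert (by simp), Finset.prod_singleton]
      simp [h0, h1]
    · have : S.filter (fun j => j.1 = x) = {(x, (0 : Fin 2))} := by
        ext ⟨a, i⟩
        simp only [Finset.mem_filter, Finset.mem_singleton, Prod.mk.injEq]
        constructor
        · rintro ⟨hmem, rfl⟩
          fin_cases i
          · exact ⟨rfl, rfl⟩
          · exact absurd hmem h1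
        · rintro ⟨rfl, rfl⟩; exact ⟨h0, rfl⟩
      rw [this, Finset.prod_singleton]
      simp [h0, h1]
    · have : S.filter (fun j => j.1 = x) = {(x, (1 : Fin 2))} := by
        ext ⟨a, i⟩
        simp only [Finset.mem_filter, Finset.mem_singleton, Prod.mk.injEq]
        constructor
        · rintro ⟨hmem, rfl⟩
          fin_cases i
          · exact absurd hmem h0
          · exact ⟨rfl, rfl⟩
        · rintro ⟨rfl, rfl⟩; exact ⟨h1, rfl⟩
      rw [this, Finset.prod_singleton]
      simp [h0, h1]
    · have hemp : S.filter (fun j => j.1 = x) = ∅ := by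
        ext ⟨a, i⟩
        simp only [Finset.mem_filter, Finset.notMem_empty, iff_false, not_and]
        intro hmem ha
        subst ha
        fin_cases i
        · exact h0 hmem
        · exact h1 hmem
      rw [hemp, Finset.prod_empty]
      simp [h0, h1]
  rw [hS0]
  -- final arithmetic
  have e1 : (q1 : ℝ≥0∞) ≠ 0 := Nat.cast_ne_zero.2 (by omega)
  have e2 : (q2 : ℝ≥0∞) ≠ 0 := Nat.cast_ne_zero.2 (by omega)
  have e3 : (q1 : ℝ≥0∞) ≠ ∞ := ENNReal.natCast_ne_top q1
  have e4 : (q2 : ℝ≥0∞) ≠ ∞ := ENNReal.natCast_ne_top q2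
  rw [Nat.cast_mul, ENNReal.mul_inv (Or.inl e1) (Or.inl e3), mul_mul_mul_comm]
  congr 1
  · by_cases h0 : (x, (0 : Fin 2)) ∈ S
    · simp only [h0, if_pos]
      exact ennreal_aux q1 hq1
    · simp only [h0, if_neg, if_false]
      exact ENNReal.mul_inv_cancel e1 e3
  · by_cases h1 : (x, (1 : Fin 2)) ∈ S
    · simp only [h1, if_pos]
      exact ennreal_aux q2 hq2
    · simp only [h1, if_neg, if_false]
      exact ENNReal.mul_inv_cancel e2 e4

/-- if `(η x)_{x ∈ ℤ}` are i.i.d. uniform on `{1,…,q1} × {1,…,q2}`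
(modeled as `Fin q1 × Fin q2`), then the disagreement indicators `D_i(x)`, for `x ∈ ℤ`
and `i ∈ {1, 2}`, are mutually independent, and `D_i(x)` is Bernoulli with success
probability `1 - 1/q_i`. -/
theorem stmt1 {Ω : Type*} [MeasurableSpace Ω] (P : Measure Ω) [IsProbabilityMeasure P]
    (q1 q2 : ℕ) (hq1 : 2 ≤ q1) (hq2 : 2 ≤ q2)
    (η : ℤ → Ω → Fin q1 × Fin q2)
    (hmeas : ∀ x, Measurable (η x))
    (hindep : iIndepFun η P)
    (hunif : ∀ x (a : Fin q1 × Fin q2), P {ω | η x ω = a} = ((q1 : ℝ≥0∞) * q2)⁻¹) :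
    iIndepFun (disagree η) P ∧
      ∀ x : ℤ,
        P {ω | disagree η (x, 0) ω = true} = 1 - (q1 : ℝ≥0∞)⁻¹ ∧
        P {ω | disagree η (x, 1) ω = true} = 1 - (q2 : ℝ≥0∞)⁻¹ := by
  have key := main_aux P q1 q2 hq1 hq2 η hmeas hindep hunif
  have hdis : ∀ j, Measurable (disagree η j) := by
    intro j
    by_cases hj : j.2 = 0
    · have he : disagree η j = (fun p : (Fin q1 × Fin q2) × (Fin q1 × Fin q2) =>
          decide (p.1.1 ≠ p.2.1)) ∘ fun ω => (η j.1 ω, η (j.1 + 1) ω) := by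
        funext ω; simp [disagree, hj, Function.comp]
      rw [he]
      exact Measurable.of_discrete.comp ((hmeas j.1).prodMk (hmeas (j.1 + 1)))
    · have he : disagree η j = (fun p : (Fin q1 × Fin q2) × (Fin q1 × Fin q2) =>
          decide (p.1.2 ≠ p.2.2)) ∘ fun ω => (η j.1 ω, η (j.1 + 1) ω) := by
        funext ω; simp [disagree, hj, Function.comp]
      rw [he]
      exact Measurable.of_discrete.comp ((hmeas j.1).prodMk (hmeas (j.1 + 1)))
  have hsingle : ∀ j : ℤ × Fin 2, P {ω | disagree η j ω = true} =
      (if j.2 = 0 then 1 - (q1 : ℝ≥0∞)⁻¹ else 1 - (q2 : ℝ≥0∞)⁻¹) := fun j => by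
    simpa using key {j}
  constructor
  · exact iIndepSets.iIndep
      (m := fun j => MeasurableSpace.comap (disagree η j) inferInstance)
      (fun j => (hdis j).comap_le)
      (fun j => {{ω | disagree η j ω = true}})
      (fun j => IsPiSystem.singleton _)
      (fun j => by
        show MeasurableSpace.comap (disagree η j) inferInstance = _
        rw [comap_bool (disagree η j)]
        rfl)
      (iIndepSets_singleton_iff.2 (fun t => by
        rw [key t]
        exact Finset.prod_congr rfl (fun j _ => (hsingle j).symm)))
  · intro x
    constructor
    · have := key {(x, (0 : Fin 2))}
      simpa using this
    · have := key {(x, (1 : Fin 2))}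
      simpa using this
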